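/- In the slope-extension construction, for every x̄ ∈ C, every k ∈ ℤ, every y ∈ X with d(y,x̄) < ε_{k−2}, and every x ∈ C with d(x,x̄) ≥ ε_k, one has φ_x(y) ≥ f(y) + ε_{k−1}·L/3. Consequently, for every x̄ ∈ C and k ∈ ℤ, f(y) = inf{ φ_x(y) : x ∈ C, d(x,x̄) < ε_k } for all y ∈ X with d(y,x̄) < ε_{k−2}. -/

import Mathlib

open Metric

set_option maxHeartbeats 1000000

/-- Step 4 of the slope-extension construction: for `x̄ ∈ C`, `k ∈ ℤ`, `y ∈ B_{ε_{k−2}}(x̄)`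
and `x ∈ C` with `d(x,x̄) ≥ ε_k`, one has `φ_x(y) ≥ f(y) + ε_{k−1}·L/3`; consequently the
infimum defining `f(y)` can be localized to `C ∩ B_{ε_k}(x̄)`. -/
theorem f_localization
    {X : Type*} [MetricSpace X] (C : Set X) (hC : C.Nonempty)
    (g : X → ℝ) (L ε : ℝ) (hL : 0 < L) (hε : 0 < ε) (hεL : ε ≤ L)
    (hg : ∀ x ∈ C, ∀ y ∈ C, |g x - g y| ≤ L * dist x y)
    (e : ℤ → ℝ) (he : ∀ k : ℤ, 0 < e k)
    (hmono : ∀ k : ℤ, e (k - 1) / e k ≤ e k / e (k + 1))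
    (hlim : Filter.Tendsto (fun k : ℤ => e (k - 1) / e k) Filter.atBot (nhds 0))
    (hratio : ∀ k : ℤ, e (k - 1) / e k ≤ ε / (3 * (L + ε)))
    (S : X → ℤ → ℝ)
    (hS : ∀ x ∈ C, ∀ k : ℤ,
      S x k = sInf {ℓ : ℝ | 0 ≤ ℓ ∧ ∀ z ∈ C, dist z x < e k → |g z - g x| ≤ ℓ * dist x z})
    (pen : X → ℝ → ℝ)
    (hpen0 : ∀ x ∈ C, pen x 0 = 0)
    (hpennonneg : ∀ x ∈ C, ∀ t : ℝ, 0 ≤ t → 0 ≤ pen x t)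
    (hpencont : ∀ x ∈ C, ContinuousOn (pen x) (Set.Ici 0))
    (hpenlin : ∀ x ∈ C, ∀ k : ℤ, ∀ s t : ℝ, e (k - 2) ≤ s → s ≤ t → t ≤ e (k - 1) →
      pen x t - pen x s = (S x k + 3 * L * (e (k - 2) / e (k - 1))) * (t - s))
    (f : X → ℝ)
    (hf : ∀ y : X, f y = sInf ((fun x => g x + pen x (dist x y)) '' C)) :
    (∀ xb ∈ C, ∀ k : ℤ, ∀ y : X, dist y xb < e (k - 2) →
      ∀ x ∈ C, e k ≤ dist x xb →
        f y + e (k - 1) * L / 3 ≤ g x + pen x (dist x y)) ∧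
    (∀ xb ∈ C, ∀ k : ℤ, ∀ y : X, dist y xb < e (k - 2) →
      f y = sInf ((fun x => g x + pen x (dist x y)) '' (C ∩ {x : X | dist x xb < e k}))) := by
  classical
  -- basic geometric facts about `e`
  have h6 : ∀ k : ℤ, 6 * e (k - 1) ≤ e k := by
    intro k
    have h1 : e (k - 1) / e k ≤ ε / (3 * (L + ε)) := hratio k
    have h2 : ε / (3 * (L + ε)) ≤ 1 / 6 := by
      rw [div_le_div_iff₀ (by positivity) (by norm_num)]
      nlinarith
    have h3 := (div_le_iff₀ (he k)).mp (h1.trans h2)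
    linarith
  have hemono : Monotone e := by
    apply monotone_int_of_le_succ
    intro n
    have := h6 (n + 1)
    rw [add_sub_cancel_right] at this
    nlinarith [he n]
  have hgeo : ∀ (n : ℕ) (k : ℤ), e (k - n) * 6 ^ n ≤ e k := by
    intro n
    induction n with
    | zero => intro k; simp
    | succ n ih =>
      intro k
      have h1 := ih (k - 1)
      have h2 := h6 k
      have hc : k - ((n : ℤ) + 1) = k - 1 - n := by ring
      push_cast
      rw [hc]
      calc e (k - 1 - n) * 6 ^ (n + 1) = (e (k - 1 - n) * 6 ^ n) * 6 := by ring
        _ ≤ e (k - 1) * 6 := by nlinarith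
        _ ≤ e k := by linarith
  have hsmall : ∀ δ : ℝ, 0 < δ → ∃ m : ℤ, e m < δ := by
    intro δ hδ
    obtain ⟨n, hn⟩ := pow_unbounded_of_one_lt (e 0 / δ) (by norm_num : (1:ℝ) < 6)
    refine ⟨0 - n, ?_⟩
    have h := hgeo n 0
    have h2 : e 0 / δ * δ < 6 ^ n * δ := by
      apply mul_lt_mul_of_pos_right hn hδ
    rw [div_mul_cancel₀ _ (ne_of_gt hδ)] at h2
    nlinarith [he (0 - (n:ℤ)), pow_pos (by norm_num : (0:ℝ) < 6) n]
  have hbig : ∀ t : ℝ, ∃ b : ℤ, t ≤ e b := by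
    intro t
    obtain ⟨n, hn⟩ := pow_unbounded_of_one_lt (t / e 0) (by norm_num : (1:ℝ) < 6)
    refine ⟨(n : ℤ), ?_⟩
    have h := hgeo n n
    simp only [sub_self] at h
    have h2 : t / e 0 * e 0 < 6 ^ n * e 0 := mul_lt_mul_of_pos_right hn (he 0)
    rw [div_mul_cancel₀ _ (ne_of_gt (he 0))] at h2
    nlinarith
  have hbign : ∀ (t : ℝ) (a : ℤ), ∃ n : ℕ, t ≤ e (a + n) := by
    intro t a
    obtain ⟨b, hb⟩ := hbig t
    rcases le_or_gt b a with h | h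
    · exact ⟨0, by simpa using hb.trans (hemono h)⟩
    · refine ⟨(b - a).toNat, ?_⟩
      rw [Int.toNat_of_nonneg (by omega)]
      simpa using hb.trans (hemono (by omega))
  -- facts about S
  have hLmem : ∀ x ∈ C, ∀ k : ℤ,
      L ∈ {ℓ : ℝ | 0 ≤ ℓ ∧ ∀ z ∈ C, dist z x < e k → |g z - g x| ≤ ℓ * dist x z} := by
    intro x hx k
    refine ⟨hL.le, fun z hz _ => ?_⟩
    have := hg z hz x hx
    rwa [dist_comm z x] at this
  have hTbdd : ∀ x k, BddBelow {ℓ : ℝ | 0 ≤ ℓ ∧ ∀ z ∈ C, dist z x < e k →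
      |g z - g x| ≤ ℓ * dist x z} := fun x k => ⟨0, fun ℓ hℓ => hℓ.1⟩
  have hS0 : ∀ x ∈ C, ∀ k : ℤ, 0 ≤ S x k := by
    intro x hx k
    rw [hS x hx k]
    exact le_csInf ⟨L, hLmem x hx k⟩ (fun ℓ hℓ => hℓ.1)
  have hSL : ∀ x ∈ C, ∀ k : ℤ, S x k ≤ L := by
    intro x hx k
    rw [hS x hx k]
    exact csInf_le (hTbdd x k) (hLmem x hx k)
  have hSslope : ∀ x ∈ C, ∀ k : ℤ, ∀ z ∈ C, dist z x < e k →
      |g z - g x| ≤ S x k * dist x z := by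
    intro x hx k z hz hd
    rcases eq_or_lt_of_le (dist_nonneg : (0:ℝ) ≤ dist x z) with h0 | h0
    · have hzx : x = z := by
        apply eq_of_dist_eq_zero
        exact h0.symm
      subst hzx
      simp [← h0]
    · have hdiv : |g z - g x| / dist x z ≤ S x k := by
        rw [hS x hx k]
        apply le_csInf ⟨L, hLmem x hx k⟩
        intro ℓ hℓ
        rw [div_le_iff₀ h0]
        exact hℓ.2 z hz hd
      calc |g z - g x| = |g z - g x| / dist x z * dist x z := by
            rw [div_mul_cancel₀ _ (ne_of_gt h0)]
        _ ≤ S x k * dist x z := mul_le_mul_of_nonneg_right hdiv dist_nonneg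
  have hSmono : ∀ x ∈ C, ∀ a b : ℤ, a ≤ b → S x a ≤ S x b := by
    intro x hx a b hab
    rw [hS x hx a, hS x hx b]
    apply csInf_le_csInf (hTbdd x a) ⟨L, hLmem x hx b⟩
    intro ℓ hℓ
    exact ⟨hℓ.1, fun z hz hd => hℓ.2 z hz (lt_of_lt_of_le hd (hemono (by omega)))⟩
  -- telescoping estimates for pen
  have penUB : ∀ x ∈ C, ∀ (n : ℕ) (a : ℤ) (s t : ℝ), e a ≤ s → s ≤ t → t ≤ e (a + n) →
      pen x t - pen x s ≤ 3 / 2 * L * (t - s) := by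
    intro x hx n
    induction n with
    | zero =>
      intro a s t h1 h2 h3
      simp only [Nat.cast_zero, add_zero] at h3
      have : s = t := le_antisymm h2 (h3.trans h1)
      subst this
      simp
    | succ n ih =>
      intro a s t h1 h2 h3
      have hcast : a + ((n : ℤ) + 1) = (a + n) + 1 := by ring
      rw [show ((n + 1 : ℕ) : ℤ) = (n : ℤ) + 1 by push_cast; ring, hcast] at h3
      set b := a + (n : ℤ) with hb
      have hslope : ∀ s' t' : ℝ, e b ≤ s' → s' ≤ t' → t' ≤ e (b + 1) →
          pen x t' - pen x s' ≤ 3 / 2 * L * (t' - s') := by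
        intro s' t' l1 l2 l3
        have hc2 : b + 2 - 2 = b := by ring
        have hc1 : b + 2 - 1 = b + 1 := by ring
        have hlin := hpenlin x hx (b + 2) s' t' (by rw [hc2]; exact l1) l2 (by rw [hc1]; exact l3)
        rw [hc2, hc1] at hlin
        have hr : e b / e (b + 1) ≤ 1 / 6 := by
          rw [div_le_iff₀ (he (b + 1))]
          have := h6 (b + 1)
          rw [add_sub_cancel_right] at this
          linarith
        have hr0 : 0 ≤ e b / e (b + 1) := (div_pos (he b) (he (b + 1))).le
        have hSb := hSL x hx (b + 2)
        have hSb0 := hS0 x hx (b + 2)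
        rw [hlin]
        have hsl : S x (b + 2) + 3 * L * (e b / e (b + 1)) ≤ 3 / 2 * L := by
          nlinarith [mul_le_mul_of_nonneg_left hr hL.le]
        exact mul_le_mul_of_nonneg_right hsl (by linarith)
      rcases le_or_gt t (e b) with h | h
      · exact ih a s t h1 h2 h
      · rcases le_or_gt (e b) s with h' | h'
        · exact hslope s t h' h2 h3
        · have p1 := ih a s (e b) h1 h'.le le_rfl
          have p2 := hslope (e b) t le_rfl h.le h3
          linarith
  have penLB : ∀ x ∈ C, ∀ (n : ℕ) (a : ℤ) (s t : ℝ), e a ≤ s → s ≤ t → t ≤ e (a + n) →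
      S x (a + 2) * (t - s) ≤ pen x t - pen x s := by
    intro x hx n
    induction n with
    | zero =>
      intro a s t h1 h2 h3
      simp only [Nat.cast_zero, add_zero] at h3
      have : s = t := le_antisymm h2 (h3.trans h1)
      subst this
      simp
    | succ n ih =>
      intro a s t h1 h2 h3
      have hcast : a + ((n : ℤ) + 1) = (a + n) + 1 := by ring
      rw [show ((n + 1 : ℕ) : ℤ) = (n : ℤ) + 1 by push_cast; ring, hcast] at h3
      set b := a + (n : ℤ) with hb
      have hslope : ∀ s' t' : ℝ, e b ≤ s' → s' ≤ t' → t' ≤ e (b + 1) →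
          S x (a + 2) * (t' - s') ≤ pen x t' - pen x s' := by
        intro s' t' l1 l2 l3
        have hc2 : b + 2 - 2 = b := by ring
        have hc1 : b + 2 - 1 = b + 1 := by ring
        have hlin := hpenlin x hx (b + 2) s' t' (by rw [hc2]; exact l1) l2 (by rw [hc1]; exact l3)
        rw [hc2, hc1] at hlin
        have hr0 : 0 ≤ e b / e (b + 1) := (div_pos (he b) (he (b + 1))).le
        have hSm : S x (a + 2) ≤ S x (b + 2) := hSmono x hx (a + 2) (b + 2) (by omega)
        rw [hlin]
        have hsl : S x (a + 2) ≤ S x (b + 2) + 3 * L * (e b / e (b + 1)) := by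
          nlinarith
        exact mul_le_mul_of_nonneg_right hsl (by linarith)
      rcases le_or_gt t (e b) with h | h
      · exact ih a s t h1 h2 h
      · rcases le_or_gt (e b) s with h' | h'
        · exact hslope s t h' h2 h3
        · have p1 := ih a s (e b) h1 h'.le le_rfl
          have p2 := hslope (e b) t le_rfl h.le h3
          linarith
  have penUB' : ∀ x ∈ C, ∀ (a : ℤ) (s t : ℝ), e a ≤ s → s ≤ t →
      pen x t - pen x s ≤ 3 / 2 * L * (t - s) := by
    intro x hx a s t h1 h2
    obtain ⟨n, hn⟩ := hbign t a
    exact penUB x hx n a s t h1 h2 hn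
  have penLB' : ∀ x ∈ C, ∀ (a : ℤ) (s t : ℝ), e a ≤ s → s ≤ t →
      S x (a + 2) * (t - s) ≤ pen x t - pen x s := by
    intro x hx a s t h1 h2
    obtain ⟨n, hn⟩ := hbign t a
    exact penLB x hx n a s t h1 h2 hn
  have penUBfinal : ∀ x ∈ C, ∀ t : ℝ, 0 ≤ t → pen x t ≤ 3 / 2 * L * t := by
    intro x hx t ht
    rcases eq_or_lt_of_le ht with h0 | h0
    · rw [← h0, hpen0 x hx]
      norm_num
    · apply le_of_forall_pos_le_add
      intro δ hδ
      have hc : Filter.Tendsto (pen x) (nhdsWithin 0 (Set.Ici 0)) (nhds (pen x 0)) :=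
        hpencont x hx 0 (Set.mem_Ici.mpr le_rfl)
      rw [Metric.tendsto_nhdsWithin_nhds] at hc
      obtain ⟨η, hη, hball⟩ := hc δ hδ
      obtain ⟨m, hm⟩ := hsmall (min η t) (by positivity)
      have hm1 : e m < η := lt_of_lt_of_le hm (min_le_left _ _)
      have hm2 : e m < t := lt_of_lt_of_le hm (min_le_right _ _)
      have hpm : |pen x (e m)| < δ := by
        have := hball (Set.mem_Ici.mpr (he m).le)
          (by rw [Real.dist_eq, sub_zero, abs_of_pos (he m)]; exact hm1)
        rwa [hpen0 x hx, Real.dist_eq, sub_zero] at this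
      have htel := penUB' x hx m (e m) t le_rfl hm2.le
      have := abs_lt.mp hpm
      nlinarith [he m]
  -- the key pointwise estimate
  have key : ∀ xb ∈ C, ∀ k : ℤ, ∀ y : X, dist y xb < e (k - 2) →
      ∀ x ∈ C, e k ≤ dist x xb →
      g xb - L * dist y xb + 17 / 12 * (L * e (k - 1)) ≤ g x + pen x (dist x y) := by
    intro xb hxb k y hy x hx hD
    set d := dist y xb with hd
    set D := dist x xb with hDdef
    set t := dist x y with htdef
    have hd0 : 0 ≤ d := dist_nonneg
    have hD0 : 0 < D := lt_of_lt_of_le (he k) hD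
    -- least j with D < e j
    obtain ⟨j, hj1, hj2⟩ := Int.exists_least_of_bdd (P := fun j => D < e j)
      ⟨k + 1, fun z hz => by
        by_contra hc
        push_neg at hc
        have : e z ≤ e k := hemono (by omega)
        exact absurd hz (by simp only [not_lt]; linarith)⟩
      (by obtain ⟨b, hb⟩ := hbig (D + 1); exact ⟨b, show D < e b by linarith⟩)
    have hjk : k + 1 ≤ j := by
      by_contra hc
      push_neg at hc
      have : e j ≤ e k := hemono (by omega)
      linarith
    have hj3 : e (j - 1) ≤ D := by
      by_contra h
      push_neg at h
      have := hj2 (j - 1) h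
      omega
    -- geometric inequalities
    have h61 : 6 * e (j - 2) ≤ e (j - 1) := by
      have := h6 (j - 1); rw [show j - 1 - 1 = j - 2 by ring] at this; exact this
    have h62 : 6 * e (j - 3) ≤ e (j - 2) := by
      have := h6 (j - 2); rw [show j - 2 - 1 = j - 3 by ring] at this; exact this
    have hk2j3 : e (k - 2) ≤ e (j - 3) := hemono (by omega)
    have hk1j2 : e (k - 1) ≤ e (j - 2) := hemono (by omega)
    have ht : D - d ≤ t := by
      have := dist_triangle x y xb
      rw [← hd, ← hDdef, ← htdef] at this
      linarith
    have htlb : 35 / 36 * e (j - 1) ≤ t := by linarith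
    set u := min t (e (j - 1)) with hu
    have hu1 : e (j - 2) ≤ u := by
      apply le_min
      · linarith
      · linarith [he (j - 2)]
    have hu2 : u ≤ e (j - 1) := min_le_right _ _
    have hu3 : 35 / 36 * e (j - 1) ≤ u := le_min htlb (by linarith [he (j - 1)])
    have hlin := hpenlin x hx j (e (j - 2)) u le_rfl hu1 hu2
    -- pen x t - pen x u ≥ S x j * (t - u)
    have hAB : S x j * (t - u) ≤ pen x t - pen x u := by
      rcases le_or_gt t (e (j - 1)) with h | h
      · have : u = t := min_eq_left h
        rw [this]
        simp
      · have hut : u = e (j - 1) := min_eq_right h.le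
        rw [hut]
        have hp := penLB' x hx (j - 1) (e (j - 1)) t le_rfl h.le
        rw [show j - 1 + 2 = j + 1 by ring] at hp
        have hm : S x j ≤ S x (j + 1) := hSmono x hx j (j + 1) (by omega)
        have := mul_le_mul_of_nonneg_right hm (show (0:ℝ) ≤ t - e (j - 1) by linarith)
        linarith
    have hP2 : 0 ≤ pen x (e (j - 2)) := hpennonneg x hx _ (he _).le
    have hgb : |g xb - g x| ≤ S x j * D := by
      have := hSslope x hx j xb hxb (by rw [dist_comm]; exact hj1)
      rwa [← hDdef] at this
    have hA4 : g xb - S x j * D ≤ g x := by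
      have h' := abs_sub_le_iff.mp hgb
      linarith [h'.1]
    have hS0' := hS0 x hx j
    have hSL' := hSL x hx j
    have hr : e (j - 2) / e (j - 1) ≤ 1 / 6 := by
      rw [div_le_iff₀ (he _)]; linarith
    have hr0 : 0 ≤ e (j - 2) / e (j - 1) := (div_pos (he _) (he _)).le
    have hcancel : e (j - 2) / e (j - 1) * e (j - 1) = e (j - 2) :=
      div_mul_cancel₀ _ (ne_of_gt (he _))
    -- gain from the ratio term
    have hru : 35 / 36 * e (j - 2) ≤ e (j - 2) / e (j - 1) * u := by
      have h1 : e (j - 2) / e (j - 1) * (35 / 36 * e (j - 1)) ≤ e (j - 2) / e (j - 1) * u :=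
        mul_le_mul_of_nonneg_left hu3 hr0
      have hc2 : e (j - 2) / e (j - 1) * (35 / 36 * e (j - 1)) = 35 / 36 * e (j - 2) := by
        rw [show e (j - 2) / e (j - 1) * (35 / 36 * e (j - 1))
            = 35 / 36 * (e (j - 2) / e (j - 1) * e (j - 1)) by ring, hcancel]
      linarith
    -- expand the linear piece
    have hlin' : pen x u - pen x (e (j - 2)) =
        S x j * u - S x j * e (j - 2) + 3 * L * (e (j - 2) / e (j - 1)) * u
          - 3 * L * (e (j - 2) / e (j - 1)) * e (j - 2) := by
      rw [hlin]; ring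
    have hAB' : S x j * t - S x j * u ≤ pen x t - pen x u := by
      have hexp : S x j * (t - u) = S x j * t - S x j * u := by ring
      linarith
    have w1 : S x j * D - S x j * t ≤ S x j * d := by
      have hh := mul_le_mul_of_nonneg_left (show D - t ≤ d by linarith) hS0'
      have hexp : S x j * (D - t) = S x j * D - S x j * t := by ring
      linarith
    have w2 : S x j * d ≤ L * d := mul_le_mul_of_nonneg_right hSL' hd0
    have w3 : S x j * e (j - 2) ≤ L * e (j - 2) :=
      mul_le_mul_of_nonneg_right hSL' (he _).le
    have w4 : 3 * L * (e (j - 2) / e (j - 1)) * e (j - 2) ≤ 1 / 2 * L * e (j - 2) := by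
      have hh := mul_nonneg (mul_nonneg hL.le (he (j - 2)).le)
        (show (0:ℝ) ≤ 1 / 6 - e (j - 2) / e (j - 1) by linarith)
      nlinarith [hh]
    have w5 : 35 / 12 * (L * e (j - 2)) ≤ 3 * L * (e (j - 2) / e (j - 1)) * u := by
      have hh := mul_le_mul_of_nonneg_left hru (show (0:ℝ) ≤ 3 * L by linarith)
      nlinarith [hh]
    have w6 : L * e (k - 1) ≤ L * e (j - 2) := mul_le_mul_of_nonneg_left hk1j2 hL.le
    linarith
  -- lower bound for all x ∈ C (boundedness)
  have hbddpt : ∀ xb ∈ C, ∀ k : ℤ, ∀ y : X, dist y xb < e (k - 2) →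
      ∀ x ∈ C, g xb - 2 * (L * e k) ≤ g x + pen x (dist x y) := by
    intro xb hxb k y hy x hx
    have hd0 : (0:ℝ) ≤ dist y xb := dist_nonneg
    have hek2k : e (k - 2) ≤ e k := hemono (by omega)
    have hek1k : e (k - 1) ≤ e k := hemono (by omega)
    have hek21 : e (k - 2) ≤ e (k - 1) := hemono (by omega)
    rcases le_or_gt (e k) (dist x xb) with h | h
    · have := key xb hxb k y hy x hx h
      nlinarith [mul_le_mul_of_nonneg_left hy.le hL.le,
        mul_le_mul_of_nonneg_left hek2k hL.le,
        mul_nonneg hL.le (he (k - 1)).le, mul_nonneg hL.le (he k).le]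
    · have hslopeD : |g xb - g x| ≤ S x (k + 1) * dist x xb := by
        apply hSslope x hx (k + 1) xb hxb
        rw [dist_comm]
        exact lt_of_lt_of_le h (hemono (by omega))
      have hA4 : g xb - S x (k + 1) * dist x xb ≤ g x := by
        have h' := abs_sub_le_iff.mp hslopeD
        linarith [h'.1]
      have hS0' := hS0 x hx (k + 1)
      have hSL' := hSL x hx (k + 1)
      have hD0 : (0:ℝ) ≤ dist x xb := dist_nonneg
      rcases le_or_gt (dist x y) (e (k - 1)) with h2 | h2
      · have hp := hpennonneg x hx (dist x y) dist_nonneg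
        nlinarith [mul_le_mul_of_nonneg_right hSL' hD0,
          mul_le_mul_of_nonneg_left h.le hL.le, mul_nonneg hL.le (he k).le]
      · have hp := penLB' x hx (k - 1) (e (k - 1)) (dist x y) le_rfl h2.le
        rw [show k - 1 + 2 = k + 1 by ring] at hp
        have hpe : 0 ≤ pen x (e (k - 1)) := hpennonneg x hx _ (he _).le
        have ht : dist x xb - dist y xb ≤ dist x y := by
          have := dist_triangle x y xb
          linarith
        nlinarith [mul_le_mul_of_nonneg_left ht hS0',
          mul_le_mul_of_nonneg_right hSL'
            (show (0:ℝ) ≤ dist y xb + e (k - 1) by linarith [he (k - 1)]),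
          mul_le_mul_of_nonneg_left hy.le hL.le,
          mul_le_mul_of_nonneg_left hek2k hL.le,
          mul_le_mul_of_nonneg_left hek1k hL.le]
  -- boundedness of the image set
  have hbddset : ∀ xb ∈ C, ∀ k : ℤ, ∀ y : X, dist y xb < e (k - 2) →
      BddBelow ((fun x => g x + pen x (dist x y)) '' C) := by
    intro xb hxb k y hy
    exact ⟨g xb - 2 * (L * e k), by
      rintro a ⟨x, hx, rfl⟩
      exact hbddpt xb hxb k y hy x hx⟩
  -- f y ≤ φ_xb y
  have hfle : ∀ xb ∈ C, ∀ k : ℤ, ∀ y : X, dist y xb < e (k - 2) →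
      f y ≤ g xb + pen xb (dist xb y) := by
    intro xb hxb k y hy
    rw [hf y]
    exact csInf_le (hbddset xb hxb k y hy) ⟨xb, hxb, rfl⟩
  have part1 : ∀ xb ∈ C, ∀ k : ℤ, ∀ y : X, dist y xb < e (k - 2) →
      ∀ x ∈ C, e k ≤ dist x xb →
        f y + e (k - 1) * L / 3 ≤ g x + pen x (dist x y) := by
    intro xb hxb k y hy x hx hD
    have hk := key xb hxb k y hy x hx hD
    have hfb := hfle xb hxb k y hy
    have hpub : pen xb (dist xb y) ≤ 3 / 2 * L * dist xb y :=
      penUBfinal xb hxb _ dist_nonneg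
    rw [dist_comm xb y] at hpub hfb
    have h61 : 6 * e (k - 2) ≤ e (k - 1) := by
      have := h6 (k - 1); rw [show k - 1 - 1 = k - 2 by ring] at this; exact this
    have hd0 : (0:ℝ) ≤ dist y xb := dist_nonneg
    nlinarith [he (k - 1), mul_le_mul_of_nonneg_left hy.le hL.le,
      mul_le_mul_of_nonneg_left (show e (k - 2) ≤ 1 / 6 * e (k - 1) by linarith) hL.le]
  refine ⟨part1, ?_⟩
  intro xb hxb k y hy
  set A := (fun x => g x + pen x (dist x y)) '' C with hA
  set B := (fun x => g x + pen x (dist x y)) '' (C ∩ {x : X | dist x xb < e k}) with hB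
  have hBA : B ⊆ A := Set.image_mono (Set.inter_subset_left)
  have hAbdd : BddBelow A := hbddset xb hxb k y hy
  have hBbdd : BddBelow B := hAbdd.mono hBA
  have hBne : B.Nonempty := ⟨g xb + pen xb (dist xb y), xb, ⟨hxb, by simp [he k]⟩, rfl⟩
  have hAne : A.Nonempty := ⟨g xb + pen xb (dist xb y), xb, hxb, rfl⟩
  have hle1 : sInf A ≤ sInf B := csInf_le_csInf hAbdd hBne hBA
  rw [hf y]
  refine le_antisymm hle1 ?_
  by_contra hcon
  push_neg at hcon
  have hδpos : 0 < min (sInf B - sInf A) (e (k - 1) * L / 3) := by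
    apply lt_min (by linarith)
    have := mul_pos (he (k - 1)) hL
    linarith
  obtain ⟨a, ha, halt⟩ := exists_lt_of_csInf_lt hAne
    (show sInf A < sInf A + min (sInf B - sInf A) (e (k - 1) * L / 3) by linarith)
  obtain ⟨x, hx, rfl⟩ := ha
  rcases lt_or_ge (dist x xb) (e k) with h | h
  · have : sInf B ≤ g x + pen x (dist x y) := csInf_le hBbdd ⟨x, ⟨hx, h⟩, rfl⟩
    have h2 : min (sInf B - sInf A) (e (k - 1) * L / 3) ≤ sInf B - sInf A := min_le_left _ _
    linarith
  · have := part1 xb hxb k y hy x hx h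
    rw [hf y] at this
    have h2 : min (sInf B - sInf A) (e (k - 1) * L / 3) ≤ e (k - 1) * L / 3 := min_le_right _ _
    linarith
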